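/- Let v : [0,1] → ℝ be twice continuously differentiable and let ε ∈ (0, 1/2). Let π₁v be the affine function interpolating v at the points 1/2 and 1. Then for all x ∈ [0,1], |v(x) - (π₁v)(x)| ≤ C_ε · (∫_0^1 t^{3 - 2ε} |v''(t)|^2 dt)^{1/2}, assuming the weighted first-derivative estimate ∫_0^1 t^{1-2ε} |(v - π₁v)'(t)|^2 dt ≤ C'_ε ∫_0^1 t^{3-2ε} |v''(t)|^2 dt holds. -/

import Mathlib

open MeasureTheory

lemma measurable_rpow_const_aux (a : ℝ) : Measurable fun t : ℝ => t ^ a := by measurability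

theorem max_norm_interp_error (ε C' : ℝ) (hε : 0 < ε) (hε2 : ε < 1 / 2) (hC' : 0 < C') :
    ∃ C > (0 : ℝ), ∀ v : ℝ → ℝ, ContDiffOn ℝ 2 v (Set.Icc 0 1) →
      (∫ t in (0 : ℝ)..1, t ^ (1 - 2 * ε) *
          (deriv (fun x => v x - (v (1 / 2) + 2 * (v 1 - v (1 / 2)) * (x - 1 / 2))) t) ^ 2)
        ≤ C' * ∫ t in (0 : ℝ)..1, t ^ (3 - 2 * ε) * (deriv (deriv v) t) ^ 2 →
      ∀ x ∈ Set.Icc (0 : ℝ) 1,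
        |v x - (v (1 / 2) + 2 * (v 1 - v (1 / 2)) * (x - 1 / 2))| ≤
          C * (∫ t in (0 : ℝ)..1, t ^ (3 - 2 * ε) * (deriv (deriv v) t) ^ 2) ^ ((1 : ℝ) / 2) := by
  refine ⟨(1 / (2 * ε)) ^ ((1:ℝ)/2) * C' ^ ((1:ℝ)/2), by positivity, ?_⟩
  intro v hv hyp x hx
  set e : ℝ → ℝ := fun x => v x - (v (1 / 2) + 2 * (v 1 - v (1 / 2)) * (x - 1 / 2)) with he
  set I : ℝ := ∫ t in (0:ℝ)..1, t ^ (3 - 2 * ε) * (deriv (deriv v) t) ^ 2 with hI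
  have hI0 : 0 ≤ I := intervalIntegral.integral_nonneg (by norm_num)
    (fun u hu => mul_nonneg (Real.rpow_nonneg hu.1 _) (sq_nonneg _))
  set c : ℝ := 2 * (v 1 - v (1 / 2)) with hc
  set D : ℝ → ℝ := derivWithin v (Set.Icc 0 1) with hD
  have hDc : ContinuousOn D (Set.Icc 0 1) :=
    hv.continuousOn_derivWithin (uniqueDiffOn_Icc (by norm_num)) (by norm_num)
  set g : ℝ → ℝ := fun t => D t - c with hg
  have hgc : ContinuousOn g (Set.Icc 0 1) := hDc.sub continuousOn_const
  have key : ∀ t ∈ Set.Ioo (0:ℝ) 1, HasDerivAt e (g t) t ∧ deriv e t = g t := by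
    intro t ht
    have hmem : Set.Icc (0:ℝ) 1 ∈ nhds t := Icc_mem_nhds ht.1 ht.2
    have hca : ContDiffAt ℝ 2 v t := hv.contDiffAt hmem
    have hda : DifferentiableAt ℝ v t := hca.differentiableAt (by norm_num)
    have h1 : HasDerivAt v (D t) t := by
      rw [hD, derivWithin_of_mem_nhds hmem]; exact hda.hasDerivAt
    have hlin : HasDerivAt (fun y : ℝ => v (1/2) + 2 * (v 1 - v (1/2)) * (y - 1/2)) c t := by
      simpa [hc] using (((hasDerivAt_id t).sub_const (1/2 : ℝ)).const_mul
        (2 * (v 1 - v (1/2)))).const_add (v (1/2))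
    have hed : HasDerivAt e (g t) t := h1.sub hlin
    exact ⟨hed, hed.deriv⟩
  have haeIoc : deriv e =ᵐ[volume.restrict (Set.Ioc (0:ℝ) 1)] g := by
    rw [← Measure.restrict_congr_set Ioo_ae_eq_Ioc]
    filter_upwards [ae_restrict_mem measurableSet_Ioo] with t ht
    exact (key t ht).2
  have hIsub : Set.Ioc x 1 ⊆ Set.Ioc (0:ℝ) 1 := Set.Ioc_subset_Ioc hx.1 le_rfl
  have haex : deriv e =ᵐ[volume.restrict (Set.Ioc x 1)] g :=
    ae_restrict_of_ae_restrict_of_subset hIsub haeIoc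
  have hsubIcc : Set.uIcc x 1 ⊆ Set.Icc (0:ℝ) 1 := by
    rw [Set.uIcc_of_le hx.2]; exact Set.Icc_subset_Icc hx.1 le_rfl
  have hgi : IntervalIntegrable g volume x 1 := (hgc.mono hsubIcc).intervalIntegrable
  have hei : IntervalIntegrable (deriv e) volume x 1 :=
    hgi.congr_ae (by rw [Set.uIoc_of_le hx.2]; exact haex.symm)
  have hecont : ContinuousOn e (Set.Icc 0 1) :=
    hv.continuousOn.sub ((continuous_const.add (continuous_const.mul
      (continuous_id.sub continuous_const))).continuousOn)
  have hftc : ∫ t in x..1, deriv e t = e 1 - e x := by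
    refine intervalIntegral.integral_eq_sub_of_hasDerivAt_of_le hx.2
      (hecont.mono (Set.Icc_subset_Icc hx.1 le_rfl)) (fun t ht => ?_) hei
    have ht' : t ∈ Set.Ioo (0:ℝ) 1 := ⟨lt_of_le_of_lt hx.1 ht.1, ht.2⟩
    have := (key t ht').1
    rwa [(key t ht').2]
  have he1 : e 1 = 0 := by simp only [he]; ring
  -- Cauchy–Schwarz setup
  set μ : Measure ℝ := volume.restrict (Set.Ioc x 1) with hμ
  set f1 : ℝ → ℝ := fun t => t ^ (ε - 1/2) with hf1
  set f2 : ℝ → ℝ := fun t => t ^ (1/2 - ε) * |deriv e t| with hf2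
  have htpos : ∀ t ∈ Set.Ioc x 1, (0:ℝ) < t := fun t ht => lt_of_le_of_lt hx.1 ht.1
  have pow_aux : ∀ t : ℝ, 0 < t → ∀ a : ℝ, (t ^ a) ^ (2:ℕ) = t ^ (2*a) := by
    intro t h0 a
    rw [← Real.rpow_natCast (t ^ a) 2, ← Real.rpow_mul h0.le]
    norm_num [mul_comm]
  have rpow_aux : ∀ t : ℝ, 0 < t → ∀ a : ℝ, (t ^ a) ^ (2:ℝ) = t ^ (2*a) := by
    intro t h0 a
    rw [← Real.rpow_mul h0.le, mul_comm]
  have hWc : Continuous (fun t : ℝ => t ^ (1 - 2*ε)) := by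
    refine continuous_iff_continuousAt.2 (fun t => ?_)
    exact Real.continuousAt_rpow_const t _ (Or.inr (by linarith))
  set W : ℝ → ℝ := fun t => t ^ (1 - 2*ε) * (g t) ^ 2 with hW
  have hWcont : ContinuousOn W (Set.Icc 0 1) := hWc.continuousOn.mul (hgc.pow 2)
  have hW01 : IntervalIntegrable W volume 0 1 := by
    refine (hWcont.mono ?_).intervalIntegrable
    rw [Set.uIcc_of_le (by norm_num : (0:ℝ) ≤ 1)]
  have hWx1 : IntervalIntegrable W volume x 1 := (hWcont.mono hsubIcc).intervalIntegrable
  set J : ℝ → ℝ := fun t => t ^ (1 - 2 * ε) * (deriv e t) ^ 2 with hJ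
  have hJae : W =ᵐ[volume.restrict (Set.Ioc (0:ℝ) 1)] J := by
    filter_upwards [haeIoc] with t ht; simp [hW, hJ, ht]
  have hJaex : W =ᵐ[μ] J := by
    filter_upwards [haex] with t ht; simp [hW, hJ, ht]
  have hJ01 : IntervalIntegrable J volume 0 1 := by
    refine hW01.congr_ae ?_
    rw [Set.uIoc_of_le (by norm_num : (0:ℝ) ≤ 1)]; exact hJae
  have hJx1 : IntervalIntegrable J volume x 1 := by
    refine hWx1.congr_ae ?_
    rw [Set.uIoc_of_le hx.2]; exact hJaex
  -- measurability
  have hm1 : Measurable f1 := measurable_rpow_const_aux _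
  have hm2 : Measurable f2 := (measurable_rpow_const_aux _).mul (measurable_deriv e).abs
  -- Memℒp facts
  have hMem1 : MemLp f1 (ENNReal.ofReal 2) μ := by
    rw [show ENNReal.ofReal 2 = 2 by norm_num,
      memLp_two_iff_integrable_sq hm1.aestronglyMeasurable]
    have hint : Integrable (fun t : ℝ => t ^ (2*ε - 1)) μ :=
      (intervalIntegral.intervalIntegrable_rpow' (r := 2*ε - 1) (a := x) (b := 1)
        (by linarith)).1
    refine hint.congr ?_
    filter_upwards [ae_restrict_mem measurableSet_Ioc] with t ht
    have h0 : (0:ℝ) < t := htpos t ht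
    simp only [hf1]
    rw [pow_aux t h0, show 2*(ε - 1/2) = 2*ε - 1 by ring]
  have hMem2 : MemLp f2 (ENNReal.ofReal 2) μ := by
    rw [show ENNReal.ofReal 2 = 2 by norm_num,
      memLp_two_iff_integrable_sq hm2.aestronglyMeasurable]
    refine (hJx1.1.congr ?_)
    filter_upwards [ae_restrict_mem measurableSet_Ioc] with t ht
    have h0 : (0:ℝ) < t := htpos t ht
    simp only [hJ, hf2]
    rw [mul_pow, sq_abs, pow_aux t h0, show 2*(1/2 - ε) = 1 - 2*ε by ring]
  -- Hölder
  have hHolder : ∫ t, f1 t * f2 t ∂μ ≤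
      (∫ t, f1 t ^ (2:ℝ) ∂μ) ^ ((1:ℝ)/2) * (∫ t, f2 t ^ (2:ℝ) ∂μ) ^ ((1:ℝ)/2) := by
    have hpq : Real.HolderConjugate 2 2 := ⟨by norm_num, by norm_num, by norm_num⟩
    have h1 : 0 ≤ᵐ[μ] f1 := by
      filter_upwards [ae_restrict_mem measurableSet_Ioc] with t ht
      exact Real.rpow_nonneg (htpos t ht).le _
    have h2 : 0 ≤ᵐ[μ] f2 := by
      filter_upwards [ae_restrict_mem measurableSet_Ioc] with t ht
      exact mul_nonneg (Real.rpow_nonneg (htpos t ht).le _) (abs_nonneg _)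
    simpa using integral_mul_le_Lp_mul_Lq_of_nonneg hpq h1 h2 hMem1 hMem2
  -- identify the integrals
  have hprod : ∫ t in x..1, |deriv e t| = ∫ t, f1 t * f2 t ∂μ := by
    rw [hμ, intervalIntegral.integral_of_le hx.2]
    refine setIntegral_congr_fun measurableSet_Ioc (fun t ht => ?_)
    have h0 : (0:ℝ) < t := htpos t ht
    simp only [hf1, hf2]
    rw [← mul_assoc, ← Real.rpow_add h0, show (ε - 1/2) + (1/2 - ε) = 0 by ring,
      Real.rpow_zero, one_mul]
  have hsq1 : ∫ t, f1 t ^ (2:ℝ) ∂μ = ∫ t in x..1, t ^ (2*ε - 1) := by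
    rw [hμ, intervalIntegral.integral_of_le hx.2]
    refine setIntegral_congr_fun measurableSet_Ioc (fun t ht => ?_)
    have h0 : (0:ℝ) < t := htpos t ht
    simp only [hf1]
    rw [rpow_aux t h0, show 2*(ε - 1/2) = 2*ε - 1 by ring]
  have hsq2 : ∫ t, f2 t ^ (2:ℝ) ∂μ = ∫ t in x..1, J t := by
    rw [hμ, intervalIntegral.integral_of_le hx.2]
    refine setIntegral_congr_fun measurableSet_Ioc (fun t ht => ?_)
    have h0 : (0:ℝ) < t := htpos t ht
    simp only [hf2, hJ]
    rw [Real.mul_rpow (Real.rpow_nonneg h0.le _) (abs_nonneg _), rpow_aux t h0,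
      show 2*(1/2 - ε) = 1 - 2*ε by ring,
      show ((2:ℝ)) = ((2:ℕ):ℝ) by norm_num, Real.rpow_natCast, sq_abs]
  -- bound the two integrals
  have hbound1 : ∫ t in x..1, t ^ (2*ε - 1) ≤ 1 / (2*ε) := by
    have hmono : ∫ t in x..1, t ^ (2*ε - 1) ≤ ∫ t in (0:ℝ)..1, t ^ (2*ε - 1) := by
      refine intervalIntegral.integral_mono_interval hx.1 hx.2 le_rfl ?_
        (intervalIntegral.intervalIntegrable_rpow' (by linarith))
      filter_upwards [ae_restrict_mem measurableSet_Ioc] with t ht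
      exact Real.rpow_nonneg ht.1.le _
    have hval : ∫ t in (0:ℝ)..1, t ^ (2*ε - 1) = 1 / (2*ε) := by
      rw [integral_rpow (Or.inl (by linarith))]
      rw [Real.one_rpow, Real.zero_rpow (by intro h; simp at h; linarith)]
      ring_nf
    linarith
  have hbound2 : ∫ t in x..1, J t ≤ C' * I := by
    have hmono : ∫ t in x..1, J t ≤ ∫ t in (0:ℝ)..1, J t := by
      refine intervalIntegral.integral_mono_interval hx.1 hx.2 le_rfl ?_ hJ01
      filter_upwards [ae_restrict_mem measurableSet_Ioc] with t ht
      exact mul_nonneg (Real.rpow_nonneg ht.1.le _) (sq_nonneg _)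
    have h2 : ∫ t in (0:ℝ)..1, J t ≤ C' * I := hyp
    linarith
  -- nonnegativity
  have hn1 : 0 ≤ ∫ t, f1 t ^ (2:ℝ) ∂μ := by
    rw [hsq1]
    exact intervalIntegral.integral_nonneg hx.2
      (fun u hu => Real.rpow_nonneg (le_trans hx.1 hu.1) _)
  have hn2 : 0 ≤ ∫ t, f2 t ^ (2:ℝ) ∂μ := by
    rw [hsq2]
    exact intervalIntegral.integral_nonneg hx.2
      (fun u hu => mul_nonneg (Real.rpow_nonneg (le_trans hx.1 hu.1) _) (sq_nonneg _))
  -- final chain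
  show |e x| ≤ _
  calc |e x| = |∫ t in x..1, deriv e t| := by rw [hftc, he1, zero_sub, abs_neg]
    _ ≤ ∫ t in x..1, |deriv e t| := intervalIntegral.abs_integral_le_integral_abs hx.2
    _ = ∫ t, f1 t * f2 t ∂μ := hprod
    _ ≤ (∫ t, f1 t ^ (2:ℝ) ∂μ) ^ ((1:ℝ)/2) * (∫ t, f2 t ^ (2:ℝ) ∂μ) ^ ((1:ℝ)/2) := hHolder
    _ ≤ (1 / (2*ε)) ^ ((1:ℝ)/2) * (C' * I) ^ ((1:ℝ)/2) := by
        refine mul_le_mul (Real.rpow_le_rpow hn1 (by rw [hsq1]; exact hbound1) (by norm_num))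
          (Real.rpow_le_rpow hn2 (by rw [hsq2]; exact hbound2) (by norm_num))
          (Real.rpow_nonneg hn2 _) (Real.rpow_nonneg (by positivity) _)
    _ = (1 / (2*ε)) ^ ((1:ℝ)/2) * C' ^ ((1:ℝ)/2) * I ^ ((1:ℝ)/2) := by
        rw [Real.mul_rpow hC'.le hI0, mul_assoc]
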